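/- Let n ≥ 1. Call ν, ν′ ∈ ℤ^n chamber-compatible if (ν_i − ν_j)·(ν′_i − ν′_j) ≥ 0 for all indices i, j (equivalently, ν and ν′ lie in a common closed Weyl chamber for S_n). Let R be the free ℤ-module with basis (E_ν)_{ν∈ℤ^n}, equipped with the ℤ-bilinear multiplication determined by E_ν · E_{ν′} = E_{ν+ν′} if ν and ν′ are chamber-compatible, and E_ν · E_{ν′} = 0 otherwise. Then this multiplication is associative and commutative, and E_0 is a multiplicative unit; hence R is a commutative ring. -/

import Mathlib

/-- `ν` and `ν'` are chamber-compatible: `(ν_i - ν_j)(ν'_i - ν'_j) ≥ 0` for all `i, j`. -/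
def ChamberCompat {n : ℕ} (ν ν' : Fin n → ℤ) : Prop :=
  ∀ i j, 0 ≤ (ν i - ν j) * (ν' i - ν' j)

instance {n : ℕ} (ν ν' : Fin n → ℤ) : Decidable (ChamberCompat ν ν') :=
  inferInstanceAs (Decidable (∀ i j, 0 ≤ (ν i - ν j) * (ν' i - ν' j)))

/-- The multiplication on the free ℤ-module `R = ⊕_{ν ∈ ℤ^n} ℤ·E_ν` determined ℤ-bilinearly by
`E_ν · E_{ν'} = E_{ν+ν'}` if `ν, ν'` are chamber-compatible, and `0` otherwise.
Here `E_ν = Finsupp.single ν 1`. -/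
noncomputable def vmul {n : ℕ} (f g : (Fin n → ℤ) →₀ ℤ) : (Fin n → ℤ) →₀ ℤ :=
  f.sum fun ν a => g.sum fun ν' b =>
    if ChamberCompat ν ν' then Finsupp.single (ν + ν') (a * b) else 0

lemma scalar_split (a b c : ℤ) (h1 : 0 ≤ a * b) (h2 : 0 ≤ (a + b) * c) :
    0 ≤ b * c ∧ 0 ≤ a * c := by
  rcases lt_trichotomy b 0 with hb | hb | hb
  · have ha : a ≤ 0 := by nlinarith
    have hc : c ≤ 0 := by nlinarith
    constructor <;> nlinarith
  · subst hb
    simp only [mul_zero, zero_mul, le_refl, true_and] at *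
    rcases lt_trichotomy a 0 with ha | ha | ha
    · nlinarith
    · simp [ha]
    · nlinarith
  · have ha : 0 ≤ a := by nlinarith
    have hc : 0 ≤ c := by nlinarith
    constructor <;> nlinarith

lemma cc_symm {n : ℕ} {ν ν' : Fin n → ℤ} (h : ChamberCompat ν ν') : ChamberCompat ν' ν :=
  fun i j => by rw [mul_comm]; exact h i j

lemma key {n : ℕ} (ν ν' ν'' : Fin n → ℤ) :
    (ChamberCompat ν ν' ∧ ChamberCompat (ν + ν') ν'') ↔
    (ChamberCompat ν' ν'' ∧ ChamberCompat ν (ν' + ν'')) := by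
  have main : ∀ (μ μ' μ'' : Fin n → ℤ),
      (ChamberCompat μ μ' ∧ ChamberCompat (μ + μ') μ'') ↔
      (ChamberCompat μ μ' ∧ ChamberCompat μ' μ'' ∧ ChamberCompat μ μ'') := by
    intro μ μ' μ''
    constructor
    · rintro ⟨h1, h2⟩
      refine ⟨h1, fun i j => ?_, fun i j => ?_⟩
      · exact (scalar_split _ _ _ (h1 i j) (by have := h2 i j; simpa [sub_add_sub_comm] using this)).1
      · exact (scalar_split _ _ _ (h1 i j) (by have := h2 i j; simpa [sub_add_sub_comm] using this)).2
    · rintro ⟨h1, h2, h3⟩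
      refine ⟨h1, fun i j => ?_⟩
      have := add_nonneg (h3 i j) (h2 i j)
      simp only [Pi.add_apply]
      nlinarith [h2 i j, h3 i j]
  rw [main]
  have main' := main ν'' ν' ν
  constructor
  · rintro ⟨h1, h2, h3⟩
    refine ⟨h2, ?_⟩
    have : ChamberCompat (ν'' + ν') ν := (main'.2 ⟨cc_symm h2, cc_symm h1, cc_symm h3⟩).2
    have : ChamberCompat ν (ν'' + ν') := cc_symm this
    intro i j
    have := this i j
    simp only [Pi.add_apply] at *
    nlinarith
  · rintro ⟨h1, h2⟩
    have h2' : ChamberCompat (ν' + ν'') ν := cc_symm h2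
    have h2'' : ChamberCompat (ν'' + ν') ν := by
      intro i j; have := h2' i j; simp only [Pi.add_apply] at *; nlinarith
    have := main'.1 ⟨cc_symm h1, h2''⟩
    exact ⟨cc_symm this.2.1, h1, cc_symm this.2.2⟩

lemma vmul_zero_left {n : ℕ} (g : (Fin n → ℤ) →₀ ℤ) : vmul 0 g = 0 := by simp [vmul]

lemma vmul_zero_right {n : ℕ} (f : (Fin n → ℤ) →₀ ℤ) : vmul f 0 = 0 := by simp [vmul]

lemma vmul_single_single {n : ℕ} (ν ν' : Fin n → ℤ) (a b : ℤ) :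
    vmul (Finsupp.single ν a) (Finsupp.single ν' b) =
      if ChamberCompat ν ν' then Finsupp.single (ν + ν') (a * b) else 0 := by
  unfold vmul
  rw [Finsupp.sum_single_index (by simp), Finsupp.sum_single_index (by split <;> simp)]

lemma add_vmul {n : ℕ} (f1 f2 g : (Fin n → ℤ) →₀ ℤ) :
    vmul (f1 + f2) g = vmul f1 g + vmul f2 g := by
  unfold vmul
  rw [Finsupp.sum_add_index]
  · intro ν _; simp
  · intro ν _ a1 a2
    rw [← Finsupp.sum_add]
    refine Finsupp.sum_congr fun ν' _ => ?_
    split <;> simp [add_mul, Finsupp.single_add]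

lemma vmul_add {n : ℕ} (f g1 g2 : (Fin n → ℤ) →₀ ℤ) :
    vmul f (g1 + g2) = vmul f g1 + vmul f g2 := by
  unfold vmul
  rw [← Finsupp.sum_add]
  refine Finsupp.sum_congr fun ν _ => ?_
  rw [Finsupp.sum_add_index]
  · intro ν' _; split <;> simp
  · intro ν' _ b1 b2; split <;> simp [mul_add, Finsupp.single_add]

lemma vmul_single3 {n : ℕ} (ν ν' ν'' : Fin n → ℤ) (a b c : ℤ) :
    vmul (vmul (Finsupp.single ν a) (Finsupp.single ν' b)) (Finsupp.single ν'' c) =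
    vmul (Finsupp.single ν a) (vmul (Finsupp.single ν' b) (Finsupp.single ν'' c)) := by
  rw [vmul_single_single, vmul_single_single]
  by_cases h1 : ChamberCompat ν ν'
  · rw [if_pos h1, vmul_single_single]
    by_cases h2 : ChamberCompat (ν + ν') ν''
    · rw [if_pos h2]
      obtain ⟨h3, h4⟩ := (key ν ν' ν'').1 ⟨h1, h2⟩
      rw [if_pos h3, vmul_single_single, if_pos h4, add_assoc, mul_assoc]
    · rw [if_neg h2]
      by_cases h3 : ChamberCompat ν' ν''
      · rw [if_pos h3, vmul_single_single]
        rw [if_neg fun h4 => h2 ((key ν ν' ν'').2 ⟨h3, h4⟩).2]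
      · rw [if_neg h3, vmul_zero_right]
  · rw [if_neg h1, vmul_zero_left]
    by_cases h3 : ChamberCompat ν' ν''
    · rw [if_pos h3, vmul_single_single]
      rw [if_neg fun h4 => h1 ((key ν ν' ν'').2 ⟨h3, h4⟩).1]
    · rw [if_neg h3, vmul_zero_right]

theorem stmt3 (n : ℕ) (hn : 1 ≤ n) :
    (∀ f g h : (Fin n → ℤ) →₀ ℤ, vmul (vmul f g) h = vmul f (vmul g h)) ∧
    (∀ f g : (Fin n → ℤ) →₀ ℤ, vmul f g = vmul g f) ∧
    (∀ f : (Fin n → ℤ) →₀ ℤ, vmul (Finsupp.single 0 1) f = f) ∧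
    (∀ f : (Fin n → ℤ) →₀ ℤ, vmul f (Finsupp.single 0 1) = f) := by
  have hcomm : ∀ f g : (Fin n → ℤ) →₀ ℤ, vmul f g = vmul g f := by
    intro f g
    unfold vmul
    rw [Finsupp.sum_comm]
    refine Finsupp.sum_congr fun ν' _ => Finsupp.sum_congr fun ν _ => ?_
    rw [add_comm, mul_comm]
    exact if_congr ⟨cc_symm, cc_symm⟩ rfl rfl
  have hunitl : ∀ f : (Fin n → ℤ) →₀ ℤ, vmul (Finsupp.single 0 1) f = f := by
    intro f
    unfold vmul
    rw [Finsupp.sum_single_index (by simp)]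
    have : ∀ ν' : Fin n → ℤ, ChamberCompat 0 ν' := fun ν' i j => by simp
    calc (f.sum fun ν' b => if ChamberCompat 0 ν' then Finsupp.single (0 + ν') (1 * b) else 0)
        = f.sum fun ν' b => Finsupp.single ν' b := by
          refine Finsupp.sum_congr fun ν' _ => ?_
          rw [if_pos (this ν'), zero_add, one_mul]
      _ = f := Finsupp.sum_single f
  refine ⟨?_, hcomm, hunitl, fun f => (hcomm _ _).trans (hunitl f)⟩
  intro f g h
  induction f using Finsupp.induction with
  | zero => simp [vmul_zero_left]
  | single_add ν a f _ _ ihf =>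
    rw [add_vmul, add_vmul, add_vmul, ihf]
    congr 1
    clear ihf
    induction g using Finsupp.induction with
    | zero => simp [vmul_zero_left, vmul_zero_right]
    | single_add ν' b g _ _ ihg =>
      rw [vmul_add, add_vmul, add_vmul, vmul_add, ihg]
      congr 1
      clear ihg
      induction h using Finsupp.induction with
      | zero => simp [vmul_zero_right]
      | single_add ν'' c h _ _ ihh =>
        rw [vmul_add, vmul_add, vmul_add, ihh]
        congr 1
        exact vmul_single3 ν ν' ν'' a b c
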